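/- arXiv:1301.4093 — 4 statements merged into one kernel-verified Lean document; each statement's English description precedes it below -/
import Mathlib

section
/- Let A be a group of automorphisms of a finite group G with gcd(|A|,|G|) = 1. Suppose B is a normal subset of A generating A, and k ≥ 1. Then the commutator subgroup [G, A] is generated by the subgroups [G, b_1, ..., b_k] for b_1, ..., b_k ∈ B. -/
/-- `commStep S b` is the subgroup `[S, b]` generated by the commutators
`g⁻¹ · b(g)` for `g ∈ S`, where `b` is an automorphism. -/
def commStep {G : Type} [Group G] (S : Subgroup G) (b : MulAut G) : Subgroup G :=
  Subgroup.closure {x : G | ∃ g ∈ S, x = g⁻¹ * b g}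

namespace Stmt5Aux

variable {G : Type} [Group G]

/-- The subgroup of automorphisms `w` which preserve `K` and satisfy `x⁻¹ * w x ∈ K`. -/
def tgrp (K : Subgroup G) (x : G) : Subgroup (MulAut G) where
  carrier := {w | (∀ g, w g ∈ K ↔ g ∈ K) ∧ x⁻¹ * w x ∈ K}
  one_mem' := ⟨fun g => Iff.rfl, by simpa using K.one_mem⟩
  mul_mem' := by
    rintro w w' ⟨hw1, hw2⟩ ⟨hw'1, hw'2⟩
    refine ⟨fun g => (hw1 (w' g)).trans (hw'1 g), ?_⟩
    have h : x⁻¹ * (w * w') x = (x⁻¹ * w x) * w (x⁻¹ * w' x) := by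
      simp only [MulAut.mul_apply, map_mul, map_inv]
      group
    rw [h]
    exact K.mul_mem hw2 ((hw1 _).mpr hw'2)
  inv_mem' := by
    rintro w ⟨hw1, hw2⟩
    have hinv : ∀ g, w⁻¹ g ∈ K ↔ g ∈ K := by
      intro g
      have := hw1 (w⁻¹ g)
      rw [show w (w⁻¹ g) = g from w.apply_symm_apply g] at this
      exact this.symm
    refine ⟨hinv, ?_⟩
    have h1 : w⁻¹ (x⁻¹ * w x) ∈ K := (hinv _).mpr hw2
    have h2 : w⁻¹ (x⁻¹ * w x) = (x⁻¹ * w⁻¹ x)⁻¹ := by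
      simp only [map_mul, map_inv]
      rw [show w⁻¹ (w x) = x from w.symm_apply_apply x]
      group
    rw [h2] at h1
    exact (K.inv_mem_iff).mp h1

theorem tgrp_congr {K : Subgroup G} {x x' : G} (h : x⁻¹ * x' ∈ K) {w : MulAut G}
    (hw : w ∈ tgrp K x) : w ∈ tgrp K x' := by
  obtain ⟨hw1, hw2⟩ := hw
  refine ⟨hw1, ?_⟩
  have key : x'⁻¹ * w x' = (x'⁻¹ * x) * ((x⁻¹ * w x) * w (x⁻¹ * x')) := by
    simp only [map_mul, map_inv]
    group
  rw [key]
  exact K.mul_mem (K.inv_mem_iff.mp (by simpa using h)) (K.mul_mem hw2 ((hw1 _).mpr h))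

/-- Key coprime fixed-point lemma: if `b` preserves `K`, moves `x` within its coset of `K`,
and the order of `b` is coprime to `|K|`, then the coset `x K` contains a `b`-fixed point. -/
theorem fixed_in_coset [Finite G] (n : ℕ) :
    ∀ (b : MulAut G) (K : Subgroup G) (x : G), orderOf b = n →
      (∀ g, b g ∈ K ↔ g ∈ K) → x⁻¹ * b x ∈ K → Nat.Coprime n (Nat.card K) →
      ∃ c ∈ K, b (x * c) = x * c := by
  induction n using Nat.strong_induction_on with
  | _ n IH =>
  intro b K x hn hK hx hcop
  rcases eq_or_ne n 1 with h1 | h1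
  · refine ⟨1, K.one_mem, ?_⟩
    have hb1 : b = 1 := orderOf_eq_one_iff.mp (hn.trans h1)
    simp [hb1]
  have hn0 : n ≠ 0 := by
    have := orderOf_pos b
    omega
  set p := n.minFac with hp_def
  have hp : p.Prime := Nat.minFac_prime h1
  set m := n.factorization p with hm_def
  set pm := p ^ m with hpm_def
  set t := n / pm with ht_def
  have hpmt : pm * t = n := Nat.ordProj_mul_ordCompl_eq_self n p
  have htdvd : t ∣ n := Nat.ordCompl_dvd n p
  have htpos : 0 < t := Nat.ordCompl_pos p hn0
  have hmpos : 0 < m := hp.factorization_pos_of_dvd hn0 (Nat.minFac_dvd n)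
  have hpmge : 2 ≤ pm := by
    calc 2 ≤ p := hp.two_le
    _ = p ^ 1 := (pow_one p).symm
    _ ≤ p ^ m := Nat.pow_le_pow_right hp.pos hmpos
  have hpmdvd : pm ∣ n := Dvd.intro t hpmt
  have htlt : t < n := by
    have h2 : 2 * t ≤ pm * t := Nat.mul_le_mul_right t hpmge
    omega
  -- the two coprime parts of b
  set u : MulAut G := b ^ t with hu_def
  set v : MulAut G := b ^ pm with hv_def
  have hbmem : b ∈ tgrp K x := ⟨hK, hx⟩
  have humem : u ∈ tgrp K x := pow_mem hbmem t
  have hvmem : v ∈ tgrp K x := pow_mem hbmem pm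
  have hou : orderOf u = pm := by
    rw [hu_def, orderOf_pow, hn, Nat.gcd_eq_right htdvd]
    exact Nat.div_eq_of_eq_mul_left htpos hpmt.symm
  have hov : orderOf v = t := by
    rw [hv_def, orderOf_pow, hn, Nat.gcd_eq_right hpmdvd, ht_def]
  have huv : u * v = v * u := (Commute.pow_pow_self b t pm)
  have huvapp : ∀ g, u (v g) = v (u g) := by
    intro g
    have h1 : (u * v) g = (v * u) g := by rw [huv]
    simpa [MulAut.mul_apply] using h1
  -- the coset x K as a type with an action of ⟨u⟩
  have hzle : Subgroup.zpowers u ≤ tgrp K x := Subgroup.zpowers_le.mpr humem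
  let C := {g : G // x⁻¹ * g ∈ K}
  letI : SMul (Subgroup.zpowers u) C :=
    ⟨fun w g => ⟨w.1 g.1, by
      have hwmem := hzle w.2
      have h : x⁻¹ * w.1 g.1 = (x⁻¹ * w.1 x) * w.1 (x⁻¹ * g.1) := by
        simp only [map_mul, map_inv]
        group
      rw [h]
      exact K.mul_mem hwmem.2 ((hwmem.1 _).mpr g.2)⟩⟩
  have smul_def : ∀ (w : Subgroup.zpowers u) (g : C), (w • g).1 = w.1 g.1 := fun _ _ => rfl
  letI : MulAction (Subgroup.zpowers u) C :=
    { one_smul := fun g => Subtype.ext (by simp [smul_def])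
      mul_smul := fun w w' g => Subtype.ext (by simp [smul_def, MulAut.mul_apply]) }
  haveI hfp : Fact p.Prime := ⟨hp⟩
  have hPu : IsPGroup p (Subgroup.zpowers u) :=
    IsPGroup.of_card (n := m) (by rw [Nat.card_zpowers, hou])
  have hcardC : Nat.card C = Nat.card K := by
    refine Nat.card_congr ⟨fun g => ⟨x⁻¹ * g.1, g.2⟩, fun k => ⟨x * k.1, by simpa using k.2⟩,
      fun g => Subtype.ext (by simp), fun k => Subtype.ext (by simp)⟩
  have hpK : ¬ p ∣ Nat.card C := by
    rw [hcardC]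
    have hpn : p ∣ n := Nat.minFac_dvd n
    exact (Nat.Prime.coprime_iff_not_dvd hp).mp (Nat.Coprime.coprime_dvd_left hpn hcop)
  obtain ⟨y, hy⟩ := hPu.nonempty_fixed_point_of_prime_not_dvd_card C hpK
  set x₁ := y.1 with hx₁_def
  have hx₁K : x⁻¹ * x₁ ∈ K := y.2
  have hux₁ : u x₁ = x₁ := by
    have := hy ⟨u, Subgroup.mem_zpowers u⟩
    exact congrArg Subtype.val this
  -- fixed subgroup of u inside K
  let K₁ : Subgroup G :=
    { carrier := {g | g ∈ K ∧ u g = g}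
      one_mem' := ⟨K.one_mem, map_one u⟩
      mul_mem' := fun ha hb => ⟨K.mul_mem ha.1 hb.1, by rw [map_mul, ha.2, hb.2]⟩
      inv_mem' := fun ha => ⟨K.inv_mem ha.1, by rw [map_inv, ha.2]⟩ }
  have hK₁le : K₁ ≤ K := fun g hg => hg.1
  have hvmem₁ : v ∈ tgrp K x₁ := tgrp_congr hx₁K hvmem
  have hK₁ : ∀ g, v g ∈ K₁ ↔ g ∈ K₁ := by
    intro g
    constructor
    · rintro ⟨hgK, hgu⟩
      refine ⟨(hvmem₁.1 g).mp hgK, ?_⟩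
      have : v (u g) = v g := by rw [← huvapp, hgu]
      exact v.injective this
    · rintro ⟨hgK, hgu⟩
      exact ⟨(hvmem₁.1 g).mpr hgK, by rw [huvapp, hgu]⟩
  have hx₁v : x₁⁻¹ * v x₁ ∈ K₁ := by
    refine ⟨hvmem₁.2, ?_⟩
    have : u (x₁⁻¹ * v x₁) = x₁⁻¹ * v x₁ := by
      rw [map_mul, map_inv, hux₁, huvapp, hux₁]
    exact this
  have hcop₁ : Nat.Coprime t (Nat.card K₁) :=
    Nat.Coprime.coprime_dvd_right (Subgroup.card_dvd_of_le hK₁le)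
      (Nat.Coprime.coprime_dvd_left htdvd hcop)
  obtain ⟨c₁, hc₁, hvfix⟩ := IH t htlt v K₁ x₁ hov hK₁ hx₁v hcop₁
  have hufix : u (x₁ * c₁) = x₁ * c₁ := by
    rw [map_mul, hux₁, hc₁.2]
  -- the stabilizer subgroup of x₁ * c₁
  let Sg : Subgroup (MulAut G) :=
    { carrier := {w | w (x₁ * c₁) = x₁ * c₁}
      one_mem' := rfl
      mul_mem' := fun ha hb => by
        simp only [Set.mem_setOf_eq, MulAut.mul_apply] at *
        rw [hb, ha]
      inv_mem' := fun ha => by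
        simp only [Set.mem_setOf_eq] at *
        conv_lhs => rw [← ha]
        exact MulEquiv.symm_apply_apply _ _ }
  have huS : u ∈ Sg := hufix
  have hvS : v ∈ Sg := hvfix
  -- Bezout: b is a product of integer powers of u and v
  have hcoptpm : Nat.Coprime t pm :=
    (Nat.Coprime.pow_left m ((Nat.Prime.coprime_iff_not_dvd hp).mpr
      (Nat.not_dvd_ordCompl hp hn0))).symm
  have hbez : (1 : ℤ) = t * Nat.gcdA t pm + pm * Nat.gcdB t pm := by
    have := Nat.gcd_eq_gcd_ab t pm
    rwa [Nat.Coprime.gcd_eq_one hcoptpm, Nat.cast_one] at this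
  have hbS : b ∈ Sg := by
    have hb : b = u ^ (Nat.gcdA t pm) * v ^ (Nat.gcdB t pm) := by
      rw [hu_def, hv_def, ← zpow_natCast b t, ← zpow_natCast b pm, ← zpow_mul, ← zpow_mul,
        ← zpow_add, ← hbez, zpow_one]
    rw [hb]
    exact Sg.mul_mem (Sg.zpow_mem huS _) (Sg.zpow_mem hvS _)
  refine ⟨(x⁻¹ * x₁) * c₁, K.mul_mem hx₁K hc₁.1, ?_⟩
  have hxc : x * ((x⁻¹ * x₁) * c₁) = x₁ * c₁ := by group
  rw [hxc]
  exact hbS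

theorem commStep_le_commStep_top (S : Subgroup G) (b : MulAut G) :
    commStep S b ≤ commStep ⊤ b := by
  apply Subgroup.closure_mono
  rintro x ⟨g, _, rfl⟩
  exact ⟨g, trivial, rfl⟩

theorem commStep_top_inv (b : MulAut G) : ∀ g, b g ∈ commStep ⊤ b ↔ g ∈ commStep ⊤ b := by
  have hmap : Subgroup.map b.toMonoidHom (commStep ⊤ b) = commStep ⊤ b := by
    unfold commStep
    rw [MonoidHom.map_closure]
    congr 1
    ext x
    constructor
    · rintro ⟨y, ⟨g, -, rfl⟩, rfl⟩
      exact ⟨b g, trivial, by simp⟩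
    · rintro ⟨g, -, rfl⟩
      exact ⟨(b⁻¹ g)⁻¹ * b (b⁻¹ g), ⟨b⁻¹ g, trivial, rfl⟩, by
        simp [map_mul, map_inv, MulAut.apply_inv_self]⟩
  intro g
  constructor
  · intro h
    rw [← hmap] at h
    obtain ⟨y, hy, hyg⟩ := h
    rwa [show y = g from b.injective hyg] at hy
  · intro h
    rw [← hmap]
    exact ⟨g, h, rfl⟩

/-- Coprime key step: `[[G,b],b] = [G,b]`. -/
theorem commStep_idem [Finite G] (b : MulAut G)
    (hcop : Nat.Coprime (orderOf b) (Nat.card G)) :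
    commStep (commStep ⊤ b) b = commStep ⊤ b := by
  set H := commStep ⊤ b with hH_def
  apply le_antisymm (commStep_le_commStep_top H b)
  rw [hH_def]
  unfold commStep
  rw [Subgroup.closure_le]
  rintro x ⟨g, -, rfl⟩
  have hdvdH : Nat.card H ∣ Nat.card G := by
    have := Subgroup.card_dvd_of_le (le_top (a := H))
    rwa [Subgroup.card_top] at this
  have hcopH : Nat.Coprime (orderOf b) (Nat.card H) :=
    Nat.Coprime.coprime_dvd_right hdvdH hcop
  obtain ⟨c, hc, hfix⟩ := fixed_in_coset (orderOf b) b H g rfl (commStep_top_inv b)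
    (Subgroup.subset_closure ⟨g, trivial, rfl⟩) hcopH
  have key : g⁻¹ * b g = (c⁻¹)⁻¹ * b c⁻¹ := by
    have h1 : b g * b c = g * c := by rw [← map_mul]; exact hfix
    rw [map_inv]
    group
    have : b g = g * c * (b c)⁻¹ := by
      rw [← h1]; group
    rw [this]
    group
  rw [key]
  exact Subgroup.subset_closure ⟨c⁻¹, H.inv_mem hc, rfl⟩

theorem foldl_replicate [Finite G] (b : MulAut G)
    (hcop : Nat.Coprime (orderOf b) (Nat.card G)) :
    ∀ j : ℕ, (List.replicate j b).foldl commStep (commStep ⊤ b) = commStep ⊤ b := by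
  intro j
  induction j with
  | zero => rfl
  | succ j ih =>
    rw [List.replicate_succ, List.foldl_cons, commStep_idem b hcop]
    exact ih

end Stmt5Aux

/-- Let `A` be a group of automorphisms of a finite group `G` with
`gcd(|A|, |G|) = 1`, let `B` be a normal generating subset of `A` and `k ≥ 1`.
Then `[G, A]` is generated by the subgroups `[G, b_1, ..., b_k]` with
`b_1, ..., b_k ∈ B`. -/
theorem stmt5 (G : Type) [Group G] [Finite G] (A : Subgroup (MulAut G))
    (B : Set (MulAut G)) (k : ℕ) (hk : 1 ≤ k)
    (hBA : B ⊆ (A : Set (MulAut G)))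
    (hBnormal : ∀ a ∈ A, ∀ b ∈ B, a * b * a⁻¹ ∈ B)
    (hgen : Subgroup.closure B = A)
    (hcop : Nat.Coprime (Nat.card A) (Nat.card G)) :
    Subgroup.closure {x : G | ∃ g : G, ∃ a ∈ A, x = g⁻¹ * a g} =
      ⨆ bs : {f : Fin k → MulAut G // ∀ i, f i ∈ B},
        (List.ofFn bs.1).foldl commStep ⊤ := by
  set S : Set G := {x : G | ∃ g : G, ∃ a ∈ A, x = g⁻¹ * a g} with hS_def
  set Γ := Subgroup.closure S with hΓ_def
  set M := ⨆ bs : {f : Fin k → MulAut G // ∀ i, f i ∈ B},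
      (List.ofFn bs.1).foldl commStep ⊤ with hM_def
  -- Γ is invariant under every a ∈ A
  have hΓinv : ∀ a ∈ A, ∀ x ∈ Γ, a x ∈ Γ := by
    intro a ha x hx
    have hmap : Subgroup.map (a : MulAut G).toMonoidHom Γ = Γ := by
      rw [hΓ_def, MonoidHom.map_closure]
      congr 1
      ext y
      constructor
      · rintro ⟨z, ⟨g, a', ha', rfl⟩, rfl⟩
        refine ⟨a g, a * a' * a⁻¹, A.mul_mem (A.mul_mem ha ha') (A.inv_mem ha), ?_⟩
        simp [map_mul, map_inv, MulAut.mul_apply, MulAut.inv_apply_self]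
      · rintro ⟨g, a', ha', rfl⟩
        refine ⟨(a⁻¹ g)⁻¹ * (a⁻¹ * a' * a) (a⁻¹ g),
          ⟨a⁻¹ g, a⁻¹ * a' * a, A.mul_mem (A.mul_mem (A.inv_mem ha) ha') ha, rfl⟩, ?_⟩
        simp [map_mul, map_inv, MulAut.mul_apply, MulAut.apply_inv_self]
    rw [← hmap]
    exact ⟨x, hx, rfl⟩
  have hAmem : ∀ b ∈ A, ∀ g : G, g⁻¹ * b g ∈ Γ := fun b hb g =>
    Subgroup.subset_closure ⟨g, b, hb, rfl⟩
  -- step preservation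
  have hstep : ∀ (T : Subgroup G) (b : MulAut G), b ∈ A → T ≤ Γ → commStep T b ≤ Γ := by
    intro T b hb hT
    unfold commStep
    rw [Subgroup.closure_le]
    rintro x ⟨g, hg, rfl⟩
    exact Γ.mul_mem (Γ.inv_mem (hT hg)) (hΓinv b hb g (hT hg))
  have hfold : ∀ (l : List (MulAut G)) (T : Subgroup G), T ≤ Γ → (∀ b ∈ l, b ∈ A) →
      l.foldl commStep T ≤ Γ := by
    intro l
    induction l with
    | nil => intro T hT _; exact hT
    | cons b l ih =>
      intro T hT hl
      rw [List.foldl_cons]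
      exact ih _ (hstep T b (hl b List.mem_cons_self) hT)
        (fun b' hb' => hl b' (List.mem_cons_of_mem b hb'))
  apply le_antisymm
  · -- Γ ≤ M : via the subgroup D of automorphisms a with ∀ g, g⁻¹ a g ∈ M
    rw [hΓ_def]
    rw [Subgroup.closure_le]
    have hA : Finite A := Subtype.finite
    let D : Subgroup (MulAut G) :=
      { carrier := {a | ∀ g : G, g⁻¹ * a g ∈ M}
        one_mem' := fun g => by simpa using M.one_mem
        mul_mem' := by
          intro a a' ha ha' g
          have h : g⁻¹ * (a * a') g = (g⁻¹ * a' g) * ((a' g)⁻¹ * a (a' g)) := by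
            simp only [MulAut.mul_apply]
            group
          rw [h]
          exact M.mul_mem (ha' g) (ha (a' g))
        inv_mem' := by
          intro a ha g
          have h : g⁻¹ * a⁻¹ g = ((a⁻¹ g)⁻¹ * a (a⁻¹ g))⁻¹ := by
            rw [mul_inv_rev, inv_inv, MulAut.apply_inv_self]
          rw [h]
          exact M.inv_mem (ha (a⁻¹ g)) }
    have hBD : B ⊆ (D : Set (MulAut G)) := by
      intro b hb
      intro g
      -- coprimality for b
      have hbA : b ∈ A := hBA hb
      have hob : orderOf b ∣ Nat.card A := by
        have := orderOf_dvd_natCard (⟨b, hbA⟩ : A)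
        rwa [Subgroup.orderOf_mk] at this
      have hcb : Nat.Coprime (orderOf b) (Nat.card G) :=
        Nat.Coprime.coprime_dvd_left hob hcop
      have hrep : (List.ofFn (fun _ : Fin k => b)).foldl commStep ⊤ = commStep ⊤ b := by
        rw [List.ofFn_const]
        obtain ⟨k', rfl⟩ : ∃ k', k = k' + 1 := ⟨k - 1, by omega⟩
        rw [List.replicate_succ, List.foldl_cons]
        exact Stmt5Aux.foldl_replicate b hcb k'
      have hle : (List.ofFn (fun _ : Fin k => b)).foldl commStep ⊤ ≤ M := by
        rw [hM_def]
        exact le_iSup (fun bs : {f : Fin k → MulAut G // ∀ i, f i ∈ B} =>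
          (List.ofFn bs.1).foldl commStep ⊤) ⟨fun _ => b, fun _ => hb⟩
      rw [hrep] at hle
      exact hle (Subgroup.subset_closure ⟨g, trivial, rfl⟩)
    have hAD : A ≤ D := by
      rw [← hgen]
      exact Subgroup.closure_le D |>.mpr hBD
    rintro x ⟨g, a, ha, rfl⟩
    exact hAD ha g
  · -- M ≤ Γ
    rw [hM_def]
    apply iSup_le
    rintro ⟨f, hf⟩
    have hfA : ∀ x ∈ List.ofFn f, x ∈ A := by
      intro x hx
      rw [List.mem_ofFn] at hx
      obtain ⟨i, rfl⟩ := hx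
      exact hBA (hf i)
    have hlen : (List.ofFn f).length = k := List.length_ofFn
    match hl : List.ofFn f with
    | [] => simp [hl] at hlen; omega
    | b :: l =>
      rw [hl] at hfA
      rw [List.foldl_cons]
      refine hfold l _ ?_ (fun b' hb' => hfA b' (List.mem_cons_of_mem b hb'))
      show commStep ⊤ b ≤ Γ
      unfold commStep
      rw [Subgroup.closure_le]
      rintro x ⟨g, -, rfl⟩
      exact hAmem b (hfA b List.mem_cons_self) g
end

section
/- Let T = P_1 P_2 ⋯ P_r be a tower in a finite group: each P_i is a p_i-group for a prime p_i, P_i normalizes P_j for i < j, and [P_i, P_{i-1}] = P_i for i = 2, ..., r. Then the Fitting height of T equals exactly r. -/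
/-- The lower central series of the subgroup `H`, computed inside the ambient
group: `relLCS H 0 = H`, `relLCS H (n+1) = ⁅relLCS H n, H⁆`.  For `K ≤ H` with
`K` normal, `H/K` is nilpotent iff `relLCS H c ≤ K` for some `c`. -/
def relLCS {G : Type} [Group G] (H : Subgroup G) : ℕ → Subgroup G
  | 0 => H
  | n + 1 => ⁅relLCS H n, H⁆

/-- `G` has Fitting height at most `h`: there is a normal series of length `h`
with nilpotent quotients. -/
def FittingHeightLE (G : Type) [Group G] (h : ℕ) : Prop :=
  ∃ C : ℕ → Subgroup G, C 0 = ⊥ ∧ C h = ⊤ ∧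
    ∀ i < h, (C i).Normal ∧ C i ≤ C (i + 1) ∧ ∃ c, relLCS (C (i + 1)) c ≤ C i

/-- The Fitting height of `G`: the least `h` with `F_h(G) = G`. -/
noncomputable def fittingHeight (G : Type) [Group G] : ℕ :=
  sInf {h | FittingHeightLE G h}

section Aux

variable {G : Type} [Group G]

lemma relLCS_map {G' : Type} [Group G'] (f : G →* G') (H : Subgroup G) :
    ∀ n, (relLCS H n).map f = relLCS (H.map f) n
  | 0 => rfl
  | n + 1 => by
    show (⁅relLCS H n, H⁆ : Subgroup G).map f = ⁅relLCS (H.map f) n, H.map f⁆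
    rw [Subgroup.map_commutator, relLCS_map f H n]

lemma relLCS_eq_map (H : Subgroup G) :
    ∀ n, relLCS H n = (lowerCentralSeries (⊤ : Subgroup ↥H) n).map H.subtype
  | 0 => by
    show H = ((⊤ : Subgroup ↥H)).map H.subtype
    rw [← MonoidHom.range_eq_map, Subgroup.range_subtype]
  | n + 1 => by
    have hsucc : lowerCentralSeries (⊤ : Subgroup ↥H) (n + 1) = ⁅lowerCentralSeries (⊤ : Subgroup ↥H) n, ⊤⁆ := rfl
    show (⁅relLCS H n, H⁆ : Subgroup G) = _
    rw [hsucc, Subgroup.map_commutator, ← relLCS_eq_map H n,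
      ← MonoidHom.range_eq_map, Subgroup.range_subtype]

lemma normal_subgroupOf_of_le_normalizer {N T : Subgroup G} (h : T ≤ Subgroup.normalizer (N : Set G)) :
    (N.subgroupOf T).Normal := by
  constructor
  intro n hn g
  rw [Subgroup.mem_subgroupOf] at hn ⊢
  have := (Subgroup.mem_normalizer_iff.mp (h g.2) (n : G)).mp hn
  simpa using this

lemma mem_normalizer_iSup {ι : Sort*} (Q : ι → Subgroup G) (g : G)
    (hg : ∀ i, g ∈ Subgroup.normalizer (Q i : Set G)) : g ∈ Subgroup.normalizer ((⨆ i, Q i : Subgroup G) : Set G) := by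
  have key : ∀ g : G, (∀ i, g ∈ Subgroup.normalizer (Q i : Set G)) →
      ∀ h ∈ ⨆ i, Q i, g * h * g⁻¹ ∈ ⨆ i, Q i := by
    intro g hg h hh
    refine Subgroup.iSup_induction (C := fun x => g * x * g⁻¹ ∈ ⨆ i, Q i) Q hh
      (fun i x hx => ?_) (by simpa using one_mem _) (fun x y hx hy => ?_)
    · exact le_iSup Q i ((Subgroup.mem_normalizer_iff.mp (hg i) x).mp hx)
    · show g * (x * y) * g⁻¹ ∈ ⨆ i, Q i
      have heq : g * (x * y) * g⁻¹ = (g * x * g⁻¹) * (g * y * g⁻¹) := by group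
      rw [heq]; exact mul_mem hx hy
  rw [Subgroup.mem_normalizer_iff]
  intro h
  constructor
  · exact key g hg h
  · intro hh
    have := key g⁻¹ (fun i => inv_mem (hg i)) _ hh
    simpa [mul_assoc] using this

lemma lemA {Q R H : Subgroup G} (hQ : Q ≤ H) (hR : R ≤ H) (hc : ⁅Q, R⁆ = Q) :
    ∀ n, Q ≤ relLCS H n
  | 0 => hQ
  | n + 1 => by
    show Q ≤ ⁅relLCS H n, H⁆
    rw [← hc]
    exact Subgroup.commutator_mono (lemA hQ hR hc n) hR

/-- Key nilpotency lemma: if `Q` is a finite `p`-group and `Q ⊔ N` normalizes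
`N`, then `relLCS (Q ⊔ N) c ≤ N` for some `c`. -/
lemma lemC [Finite G] {p : ℕ} (hp : p.Prime) {Q N : Subgroup G}
    (hQ : IsPGroup p Q) (hn : Q ⊔ N ≤ Subgroup.normalizer (N : Set G)) :
    ∃ c, relLCS (Q ⊔ N) c ≤ N := by
  haveI : Fact p.Prime := ⟨hp⟩
  set H : Subgroup G := Q ⊔ N with hH
  have hQH : Q ≤ H := le_sup_left
  have hNH : N ≤ H := le_sup_right
  haveI : (N.subgroupOf H).Normal := normal_subgroupOf_of_le_normalizer hn
  set π : ↥H →* ↥H ⧸ N.subgroupOf H := QuotientGroup.mk' (N.subgroupOf H) with hπ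
  have hsup : Q.subgroupOf H ⊔ N.subgroupOf H = ⊤ := by
    apply Subgroup.map_injective H.subtype_injective
    rw [Subgroup.map_sup, Subgroup.subgroupOf_map_subtype, Subgroup.subgroupOf_map_subtype,
      ← MonoidHom.range_eq_map, Subgroup.range_subtype,
      inf_of_le_left hQH, inf_of_le_left hNH]
  have htop : (Q.subgroupOf H).map π = ⊤ := by
    have h1 : (N.subgroupOf H).map π = ⊥ :=
      (Subgroup.map_eq_bot_iff _).mpr (by rw [hπ, QuotientGroup.ker_mk'])
    have h2 : ((⊤ : Subgroup ↥H)).map π = ⊤ :=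
      Subgroup.map_top_of_surjective π (QuotientGroup.mk'_surjective _)
    rw [← hsup, Subgroup.map_sup, h1, sup_bot_eq] at h2
    exact h2
  have hpq : IsPGroup p (↥H ⧸ N.subgroupOf H) := by
    have h2 : IsPGroup p (Q.subgroupOf H) := hQ.comap_subtype
    have h3 := h2.map π
    rw [htop] at h3
    exact h3.of_equiv Subgroup.topEquiv
  have hnil : Group.IsNilpotent (↥H ⧸ N.subgroupOf H) := hpq.isNilpotent
  obtain ⟨c, hc⟩ := nilpotent_iff_lowerCentralSeries.mp hnil
  refine ⟨c, ?_⟩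
  have h4 : lowerCentralSeries (⊤ : Subgroup ↥H) c ≤ N.subgroupOf H := by
    have h5 : (lowerCentralSeries (⊤ : Subgroup ↥H) c).map π = ⊥ :=
      le_bot_iff.mp (hc ▸ lowerCentralSeries.map π c)
    have h6 := (Subgroup.map_eq_bot_iff _).mp h5
    rwa [hπ, QuotientGroup.ker_mk'] at h6
  calc relLCS H c = (lowerCentralSeries (⊤ : Subgroup ↥H) c).map H.subtype := relLCS_eq_map H c
    _ ≤ (N.subgroupOf H).map H.subtype := Subgroup.map_mono h4
    _ = N ⊓ H := Subgroup.subgroupOf_map_subtype _ _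
    _ ≤ N := inf_le_left

/-- Lower bound: a tower of height `r` inside a series of length `h` with
"nilpotent" quotients forces `r ≤ h`. -/
lemma lemB : ∀ (h : ℕ) (r : ℕ) (P : Fin r → Subgroup G), (∀ i, P i ≠ ⊥) →
    (∀ (i : Fin r) (hi : (i : ℕ) + 1 < r), ⁅P ⟨(i : ℕ) + 1, hi⟩, P i⁆ = P ⟨(i : ℕ) + 1, hi⟩) →
    ∀ C : ℕ → Subgroup G, C 0 = ⊥ →
    (∀ i < h, ∃ c, relLCS (C (i + 1)) c ≤ C i) → (∀ i, P i ≤ C h) → r ≤ h := by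
  intro h
  induction h with
  | zero =>
    intro r P hnt _ C hC0 _ hle
    rcases Nat.eq_zero_or_pos r with h0 | h0
    · omega
    · exact absurd (le_bot_iff.mp (hC0 ▸ hle ⟨0, h0⟩)) (hnt ⟨0, h0⟩)
  | succ k ih =>
    intro r P hnt hcm C hC0 hrel hle
    rcases r with _ | s
    · omega
    have key : ∀ j : Fin s, P ⟨(j : ℕ) + 1, by omega⟩ ≤ C k := by
      intro j
      obtain ⟨c, hc⟩ := hrel k (Nat.lt_succ_self k)
      have hj1 : (j : ℕ) + 1 < s + 1 := by have := j.isLt; omega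
      have h1 := hcm ⟨(j : ℕ), by omega⟩ hj1
      exact le_trans (lemA (hle _) (hle _) h1 c) hc
    have hs : s ≤ k := by
      refine ih s (fun j => P ⟨(j : ℕ) + 1, by omega⟩) (fun j => hnt _) ?_ C hC0
        (fun i hi => hrel i (by omega)) key
      intro j hj
      exact hcm ⟨(j : ℕ) + 1, by omega⟩ (show (j : ℕ) + 1 + 1 < s + 1 by omega)
    omega

end Aux

/-- The Fitting height of a tower `T = P_1 ⋯ P_r` (with `P_i` a nontrivial
`p_i`-group, `P_i` normalizing `P_j` for `i < j`, and `[P_i, P_{i-1}] = P_i`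
for `i = 2, ..., r`) equals exactly `r`. -/
theorem stmt6 (G : Type) [Group G] [Finite G] (r : ℕ)
    (p : Fin r → ℕ) (P : Fin r → Subgroup G)
    (hprime : ∀ i, (p i).Prime)
    (hpgroup : ∀ i, IsPGroup (p i) (P i))
    (hnontriv : ∀ i, P i ≠ ⊥)
    (hnorm : ∀ i j : Fin r, i < j → P i ≤ Subgroup.normalizer (P j : Set G))
    (hcomm : ∀ (i : Fin r) (h : (i : ℕ) + 1 < r),
      ⁅P ⟨(i : ℕ) + 1, h⟩, P i⁆ = P ⟨(i : ℕ) + 1, h⟩) :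
    fittingHeight ↥(⨆ i, P i) = r := by
  set T : Subgroup G := ⨆ i, P i with hT
  -- the partial joins
  set D : ℕ → Subgroup G := fun i => ⨆ j : Fin r, ⨆ _ : r ≤ (j : ℕ) + i, P j with hD
  have hDbot : D 0 = ⊥ :=
    le_bot_iff.mp (iSup_le fun j => iSup_le fun hj => absurd hj (by have := j.isLt; omega))
  have hDtop : D r = T := by
    apply le_antisymm (iSup_le fun j => iSup_le fun _ => le_iSup P j)
    exact iSup_le fun j =>
      le_trans (le_iSup (fun _ : r ≤ (j : ℕ) + r => P j) (by omega))
        (le_iSup (fun j : Fin r => ⨆ _ : r ≤ (j : ℕ) + r, P j) j)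
  have hDmono : ∀ i, D i ≤ D (i + 1) := fun i =>
    iSup_le fun j => iSup_le fun hj =>
      le_trans (le_iSup (fun _ : r ≤ (j : ℕ) + (i + 1) => P j) (by omega))
        (le_iSup (fun j : Fin r => ⨆ _ : r ≤ (j : ℕ) + (i + 1), P j) j)
  have hDleT : ∀ i, D i ≤ T := fun i => iSup_le fun j => iSup_le fun _ => le_iSup P j
  have hTnorm : ∀ i, T ≤ Subgroup.normalizer (D i : Set G) := by
    intro i
    refine iSup_le fun k => ?_
    by_cases hk : r ≤ (k : ℕ) + i
    · refine le_trans ?_ Subgroup.le_normalizer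
      exact le_trans (le_iSup (fun _ : r ≤ (k : ℕ) + i => P k) hk)
        (le_iSup (fun j : Fin r => ⨆ _ : r ≤ (j : ℕ) + i, P j) k)
    · intro g hg
      apply mem_normalizer_iSup
      intro j
      by_cases hj : r ≤ (j : ℕ) + i
      · rw [iSup_pos hj]
        exact hnorm k j (by rw [Fin.lt_def]; omega) hg
      · rw [iSup_neg hj]
        rw [Subgroup.mem_normalizer_iff]
        intro h
        simp only [Subgroup.mem_bot]
        constructor
        · rintro rfl; group
        · intro hh
          have : h = g⁻¹ * (g * h * g⁻¹) * g := by group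
          rw [this, hh]; group
  have hsplit : ∀ i, ∀ hi : i < r, D (i + 1) = P ⟨r - 1 - i, by omega⟩ ⊔ D i := by
    intro i hi
    apply le_antisymm
    · refine iSup_le fun j => iSup_le fun hj => ?_
      by_cases h2 : r ≤ (j : ℕ) + i
      · exact le_sup_of_le_right
          (le_trans (le_iSup (fun _ : r ≤ (j : ℕ) + i => P j) h2)
            (le_iSup (fun j : Fin r => ⨆ _ : r ≤ (j : ℕ) + i, P j) j))
      · have hje : j = ⟨r - 1 - i, by omega⟩ := Fin.ext (by have := j.isLt; simp; omega)
        rw [hje]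
        exact le_sup_left
    · refine sup_le ?_ (hDmono i)
      exact le_trans (le_iSup (fun _ : r ≤ ((⟨r - 1 - i, by omega⟩ : Fin r) : ℕ) + (i + 1) => P ⟨r - 1 - i, by omega⟩) (show r ≤ r - 1 - i + (i + 1) by omega))
        (le_iSup (fun j : Fin r => ⨆ _ : r ≤ (j : ℕ) + (i + 1), P j) ⟨r - 1 - i, by omega⟩)
  -- upper bound
  have upper : FittingHeightLE ↥T r := by
    refine ⟨fun i => (D i).subgroupOf T, ?_, ?_, ?_⟩
    · show (D 0).subgroupOf T = ⊥
      rw [hDbot]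
      rw [← Subgroup.comap_subtype, MonoidHom.comap_bot, Subgroup.ker_subtype]
    · show (D r).subgroupOf T = ⊤
      rw [hDtop, Subgroup.subgroupOf_self]
    · intro i hi
      refine ⟨normal_subgroupOf_of_le_normalizer (hTnorm i), ?_, ?_⟩
      · show (D i).subgroupOf T ≤ (D (i + 1)).subgroupOf T
        rw [← Subgroup.comap_subtype, ← Subgroup.comap_subtype]
        exact Subgroup.comap_mono (hDmono i)
      · set m : Fin r := ⟨r - 1 - i, by omega⟩ with hm
        have hQN : P m ⊔ D i ≤ Subgroup.normalizer (D i : Set G) :=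
          le_trans (by rw [← hsplit i hi]; exact hDleT (i + 1)) (hTnorm i)
        obtain ⟨c, hc⟩ := lemC (hprime m) (hpgroup m) hQN
        refine ⟨c, ?_⟩
        show relLCS ((D (i + 1)).subgroupOf T) c ≤ (D i).subgroupOf T
        rw [← Subgroup.map_le_map_iff_of_injective T.subtype_injective,
          relLCS_map, Subgroup.subgroupOf_map_subtype, Subgroup.subgroupOf_map_subtype,
          inf_of_le_left (hDleT (i + 1)), inf_of_le_left (hDleT i), hsplit i hi]
        exact hc
  -- lower bound
  have lower : ∀ h ∈ {h | FittingHeightLE ↥T h}, r ≤ h := by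
    rintro h ⟨C, hC0, hCh, hCi⟩
    refine lemB h r P hnontriv hcomm (fun i => (C i).map T.subtype) ?_ ?_ ?_
    · show (C 0).map T.subtype = ⊥
      rw [hC0, Subgroup.map_bot]
    · intro i hi
      obtain ⟨-, -, c, hc⟩ := hCi i hi
      refine ⟨c, ?_⟩
      show relLCS ((C (i + 1)).map T.subtype) c ≤ (C i).map T.subtype
      rw [← relLCS_map]
      exact Subgroup.map_mono hc
    · intro i
      show P i ≤ (C h).map T.subtype
      rw [hCh, ← MonoidHom.range_eq_map, Subgroup.range_subtype]
      exact le_iSup P i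
  exact le_antisymm (Nat.sInf_le upper) (le_csInf ⟨r, upper⟩ lower)
end

section
/- In a tower T = P_1 ⋯ P_r of a finite group (with P_i a p_i-group, P_i normalizing P_j for i < j, and [P_i, P_{i-1}] = P_i for i ≥ 2), the product P_2 ⋯ P_r is contained in the nilpotent residual γ_∞(T). -/
/-- In a tower `T = P_1 ⋯ P_r` of a finite group (`P_i` a `p_i`-group, `P_i`
normalizing `P_j` for `i < j`, and `[P_i, P_{i-1}] = P_i` for `i ≥ 2`), the
product `P_2 ⋯ P_r` is contained in the nilpotent residual
`γ_∞(T) = ⋂ n, γ_n(T)` of `T = ⟨P_1, ..., P_r⟩`. -/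
theorem stmt7 (G : Type) [Group G] [Finite G] (r : ℕ)
    (p : Fin r → ℕ) (P : Fin r → Subgroup G)
    (hprime : ∀ i, (p i).Prime)
    (hpgroup : ∀ i, IsPGroup (p i) (P i))
    (hnorm : ∀ i j : Fin r, i < j → P i ≤ Subgroup.normalizer (P j : Set G))
    (hcomm : ∀ (i : Fin r) (h : (i : ℕ) + 1 < r),
      ⁅P ⟨(i : ℕ) + 1, h⟩, P i⁆ = P ⟨(i : ℕ) + 1, h⟩) :
    ∀ i : Fin r, 0 < (i : ℕ) →
      P i ≤ Subgroup.map (⨆ j, P j).subtype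
        (⨅ n, Subgroup.lowerCentralSeries (⊤ : Subgroup ↥(⨆ j, P j)) n) := by
  intro i hi
  set T := ⨆ j, P j with hT
  have hle : ∀ j, P j ≤ T := fun j => le_iSup P j
  have htop : Subgroup.map T.subtype (⊤ : Subgroup ↥T) = T := by
    rw [← MonoidHom.range_eq_map, T.range_subtype]
  have key : ∀ n, ∀ j : Fin r, 0 < (j : ℕ) →
      P j ≤ Subgroup.map T.subtype (Subgroup.lowerCentralSeries (⊤ : Subgroup ↥T) n) := by
    intro n
    induction n with
    | zero =>
      intro j _
      simpa [Subgroup.lowerCentralSeries_zero, htop] using hle j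
    | succ n ih =>
      intro j hj
      obtain ⟨k, hk⟩ : ∃ k, k + 1 = (j : ℕ) := ⟨(j : ℕ) - 1, by omega⟩
      have hkr : k < r := by omega
      have h1 : k + 1 < r := by omega
      have hj' : (⟨k + 1, h1⟩ : Fin r) = j := Fin.ext (by simp [hk])
      have hc := hcomm ⟨k, hkr⟩ h1
      rw [hj'] at hc
      calc P j = ⁅P j, P ⟨k, hkr⟩⁆ := hc.symm
        _ ≤ ⁅Subgroup.map T.subtype (Subgroup.lowerCentralSeries (⊤ : Subgroup ↥T) n), T⁆ :=
            Subgroup.commutator_mono (ih j hj) (hle _)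
        _ = Subgroup.map T.subtype (Subgroup.lowerCentralSeries (⊤ : Subgroup ↥T) (n + 1)) := by
            have hs : Subgroup.lowerCentralSeries (⊤ : Subgroup ↥T) (n + 1) =
                ⁅Subgroup.lowerCentralSeries (⊤ : Subgroup ↥T) n, (⊤ : Subgroup ↥T)⁆ := rfl
            rw [hs, Subgroup.map_commutator, htop]
  intro x hx
  have hxT : x ∈ T := hle i hx
  refine Subgroup.mem_map.mpr ⟨⟨x, hxT⟩, ?_, rfl⟩
  rw [Subgroup.mem_iInf]
  intro n
  obtain ⟨y, hy, hyx⟩ := key n i hi hx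
  have hyeq : y = ⟨x, hxT⟩ := Subtype.ext hyx
  rwa [hyeq] at hy
end

section
/- Let G be a finite group, w a word, e a positive integer such that every w-value in G has order dividing e. Define w_e as the product of e disjoint copies of w (so w_e-values are products of e w-values). If N is a normal subgroup of G containing no nontrivial w_e-values of G, then [N, w(G)] = 1, i.e., N centralizes the verbal subgroup w(G). -/
/-- The set of `w`-values in `G`: images of the word `w` (an element of the
free group on countably many variables) under all homomorphisms to `G`. -/
def wValues (w : FreeGroup ℕ) (G : Type) [Group G] : Set G :=
  {g | ∃ φ : FreeGroup ℕ →* G, φ w = g}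

/-- `w_j`-values: products of `j` `w`-values of `G`. -/
def wProdValues (w : FreeGroup ℕ) (G : Type) [Group G] (j : ℕ) : Set G :=
  {g | ∃ l : List G, l.length = j ∧ (∀ x ∈ l, x ∈ wValues w G) ∧ l.prod = g}

/-- Let `G` be a finite group, `w` a word all of whose values in `G` have
order dividing `e > 0`.  If `N` is a normal subgroup of `G` containing no
nontrivial `w_e`-values of `G`, then `[N, w(G)] = 1`. -/
theorem stmt10 (G : Type) [Group G] [Finite G] (w : FreeGroup ℕ) (e : ℕ)
    (he : 0 < e)
    (horder : ∀ y ∈ wValues w G, y ^ e = 1)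
    (N : Subgroup G) (hN : N.Normal)
    (hno : ∀ g ∈ wProdValues w G e, g ∈ N → g = 1) :
    ⁅N, Subgroup.closure (wValues w G)⁆ = ⊥ := by
  rw [Subgroup.commutator_eq_bot_iff_le_centralizer]
  intro x hx
  rw [Subgroup.mem_centralizer_iff]
  have key : ∀ y ∈ wValues w G, y * x = x * y := by
    intro y hy
    -- the conjugate y^x is a w-value
    have hyx : x⁻¹ * y * x ∈ wValues w G := by
      obtain ⟨φ, hφ⟩ := hy
      exact ⟨(MulAut.conj x⁻¹).toMonoidHom.comp φ, by
        simp [hφ, MulAut.conj_apply, mul_assoc]⟩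
    set g := y⁻¹ * (x⁻¹ * y * x) with hg
    have hgN : g ∈ N := by
      have : y⁻¹ * x⁻¹ * y ∈ N := by simpa using hN.conj_mem _ (N.inv_mem hx) y⁻¹
      have := N.mul_mem this hx
      simpa [hg, mul_assoc] using this
    have hginv : y ^ (e - 1) = y⁻¹ := by
      have hye := horder y hy
      have : y ^ (e - 1) * y = 1 := by
        rw [← pow_succ, Nat.sub_add_cancel he, hye]
      exact eq_inv_of_mul_eq_one_left this
    have hgval : g ∈ wProdValues w G e := by
      refine ⟨List.replicate (e - 1) y ++ [x⁻¹ * y * x], ?_, ?_, ?_⟩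
      · simp [Nat.sub_add_cancel he]
      · intro z hz
        rcases List.mem_append.1 hz with h | h
        · rw [List.eq_of_mem_replicate h]; exact hy
        · simp at h; rw [h]; exact hyx
      · simp [List.prod_replicate, hginv, hg]
    have hg1 : g = 1 := hno g hgval hgN
    have : x⁻¹ * y * x = y := by
      have := hg1
      rw [hg] at this
      have h2 : x⁻¹ * y * x = y * 1 := by rw [← this]; group
      simpa using h2
    calc y * x = x * (x⁻¹ * y * x) := by group
    _ = x * y := by rw [this]
  intro g hg
  induction hg using Subgroup.closure_induction with
  | mem z hz => exact key z hz
  | one => simp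
  | mul a b _ _ ha hb => rw [mul_assoc, hb, ← mul_assoc, ha, mul_assoc]
  | inv a _ ha =>
      have : x * a = a * x := ha.symm
      calc a⁻¹ * x = a⁻¹ * x * a * a⁻¹ := by group
      _ = a⁻¹ * (x * a) * a⁻¹ := by group
      _ = x * a⁻¹ := by rw [this]; group
end
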